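/- Let a ~ N(Re(d), r/2) and b ~ N(Im(d), r/2) be independent real Gaussian variables, for d ∈ ℂ and r > 0. Let u* = argmin_u E[(1/2) log u + a²/u] and v* = argmin_v E[(1/2) log v + b²/v]. Then (u* + v*)/2 = r + |d|². -/

import Mathlib

open MeasureTheory ProbabilityTheory

section MerlinAux

open Real Set Filter
open scoped NNReal ENNReal

namespace MerlinAux

lemma int_sq_exp_Ioi {b : ℝ} (hb : 0 < b) :
    ∫ x in Ioi (0:ℝ), x^2 * Real.exp (-b * x^2) = Real.sqrt (π / b) / (4*b) := by
  have hInt1 : IntegrableOn (fun x : ℝ => Real.exp (-b*x^2)) (Ioi 0) :=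
    (integrable_exp_neg_mul_sq hb).integrableOn
  have hInt2 : Integrable (fun x : ℝ => x^2 * Real.exp (-b*x^2)) := by
    have := integrable_rpow_mul_exp_neg_mul_sq hb (s := 2) (by norm_num)
    simpa [Real.rpow_natCast] using this
  have hderiv : ∀ x ∈ Ici (0:ℝ), HasDerivAt (fun x : ℝ => x * Real.exp (-b*x^2))
      (Real.exp (-b*x^2) - 2*b*(x^2 * Real.exp (-b*x^2))) x := by
    intro x _
    have h1 : HasDerivAt (fun x : ℝ => -b*x^2) (-b*(2*x)) x := by
      simpa using ((hasDerivAt_pow 2 x).const_mul (-b))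
    have h2 : HasDerivAt (fun x : ℝ => x * Real.exp (-b*x^2))
        (1 * Real.exp (-b*x^2) + x * (Real.exp (-b*x^2) * (-b*(2*x)))) x :=
      (hasDerivAt_id x).mul h1.exp
    convert h2 using 1
    ring
  have htend : Tendsto (fun x : ℝ => x * Real.exp (-b*x^2)) atTop (nhds 0) := by
    have h := rpow_mul_exp_neg_mul_sq_isLittleO_exp_neg hb 1
    have h3 : Tendsto (fun x : ℝ => (1/2) * x) atTop atTop :=
      Filter.Tendsto.const_mul_atTop (by norm_num) tendsto_id
    have h2 : Tendsto (fun x : ℝ => Real.exp (-(1/2) * x)) atTop (nhds 0) := by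
      have h4 := Real.tendsto_exp_neg_atTop_nhds_zero.comp h3
      apply h4.congr
      intro x
      simp only [Function.comp_apply]
      ring_nf
    have := h.isBigO.trans_tendsto h2
    simpa [Real.rpow_one] using this
  have key := integral_Ioi_of_hasDerivAt_of_tendsto' hderiv
    (hInt1.sub ((hInt2.const_mul (2*b)).integrableOn)) htend
  rw [integral_sub hInt1 ((hInt2.const_mul (2*b)).integrableOn),
    MeasureTheory.integral_const_mul, integral_gaussian_Ioi] at key
  simp only [zero_mul, sub_zero] at key
  have : (2*b) * ∫ x in Ioi (0:ℝ), x^2 * Real.exp (-b * x^2) = Real.sqrt (π / b) / 2 := by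
    linarith
  field_simp at this ⊢
  linarith

lemma int_sq_exp {b : ℝ} (hb : 0 < b) :
    ∫ x : ℝ, x^2 * Real.exp (-b * x^2) = Real.sqrt (π / b) / (2*b) := by
  have := integral_comp_abs (f := fun x : ℝ => x^2 * Real.exp (-b * x^2))
  simp only [sq_abs] at this
  rw [this, int_sq_exp_Ioi hb]
  ring

lemma int_odd_exp {b : ℝ} : ∫ x : ℝ, x * Real.exp (-b * x^2) = 0 := by
  have h := MeasureTheory.integral_neg_eq_self (fun x : ℝ => x * Real.exp (-b * x^2)) volume
  simp only [neg_mul, neg_sq] at h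
  rw [integral_neg] at h
  simp only [neg_mul]
  linarith

lemma gaussian_sq_int (μ : ℝ) (v : ℝ≥0) (hv : v ≠ 0) :
    Integrable (fun x : ℝ => x^2) (gaussianReal μ v) ∧
      ∫ x, x^2 ∂(gaussianReal μ v) = (v : ℝ) + μ^2 := by
  have hv' : (0:ℝ) < v := lt_of_le_of_ne v.coe_nonneg (by exact_mod_cast (Ne.symm hv))
  set b : ℝ := ((2:ℝ) * v)⁻¹ with hbdef
  have hb : 0 < b := by positivity
  set c : ℝ := (Real.sqrt (2 * π * v))⁻¹ with hcdef
  have hc : 0 < c := by positivity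
  -- rewrite the pdf
  have hpdf : ∀ x : ℝ, gaussianPDFReal μ v x = c * Real.exp (-b * (x - μ)^2) := by
    intro x
    rw [gaussianPDFReal]
    congr 1
    rw [neg_div, div_eq_inv_mul, hbdef, neg_mul]
  -- integrability of the base function
  have hI2 : Integrable (fun y : ℝ => y^2 * Real.exp (-b*y^2)) := by
    have := integrable_rpow_mul_exp_neg_mul_sq hb (s := 2) (by norm_num)
    simpa [Real.rpow_natCast] using this
  have hI1 : Integrable (fun y : ℝ => y * Real.exp (-b*y^2)) :=
    integrable_mul_exp_neg_mul_sq hb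
  have hI0 : Integrable (fun y : ℝ => Real.exp (-b*y^2)) := integrable_exp_neg_mul_sq hb
  -- the shifted integrand
  have hsum : (fun y : ℝ => (y + μ)^2 * Real.exp (-b*y^2))
      = fun y : ℝ => y^2 * Real.exp (-b*y^2) + (2*μ) * (y * Real.exp (-b*y^2))
        + μ^2 * Real.exp (-b*y^2) := by
    ext y; ring
  have hIsum : Integrable (fun y : ℝ => (y + μ)^2 * Real.exp (-b*y^2)) := by
    rw [hsum]
    exact (hI2.add ((hI1.const_mul _))).add (hI0.const_mul _)
  have hIshift : Integrable (fun x : ℝ => x^2 * Real.exp (-b*(x - μ)^2)) := by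
    have := hIsum.comp_sub_right μ
    simpa [sub_add_cancel] using this
  -- integrability wrt gaussianReal
  have hmeas : Measurable (gaussianPDF μ v) := measurable_gaussianPDF μ v
  have hlt : ∀ᵐ x : ℝ, gaussianPDF μ v x < ⊤ :=
    Eventually.of_forall fun x => ENNReal.ofReal_lt_top
  have hInt : Integrable (fun x : ℝ => x^2) (gaussianReal μ v) := by
    rw [gaussianReal_of_var_ne_zero μ hv, integrable_withDensity_iff hmeas hlt]
    have : (fun x : ℝ => x^2 * (gaussianPDF μ v x).toReal)
        = fun x : ℝ => c * (x^2 * Real.exp (-b*(x - μ)^2)) := by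
      ext x
      rw [gaussianPDF, ENNReal.toReal_ofReal (gaussianPDFReal_nonneg μ v x), hpdf]
      ring
    rw [this]
    exact hIshift.const_mul _
  refine ⟨hInt, ?_⟩
  -- compute the integral
  have hco : gaussianPDF μ v = (fun x => ((gaussianPDFReal μ v x).toNNReal : ℝ≥0∞)) := rfl
  have h1 : ∫ x, x^2 ∂(gaussianReal μ v) = ∫ x : ℝ, gaussianPDFReal μ v x * x^2 := by
    rw [gaussianReal_of_var_ne_zero μ hv, hco,
      integral_withDensity_eq_integral_smul ((measurable_gaussianPDFReal μ v).real_toNNReal)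
        (fun x : ℝ => x^2)]
    congr 1
    ext x
    rw [NNReal.smul_def, Real.coe_toNNReal _ (gaussianPDFReal_nonneg μ v x), smul_eq_mul]
  rw [h1]
  have h2 : (fun x : ℝ => gaussianPDFReal μ v x * x^2)
      = fun x : ℝ => c * (x^2 * Real.exp (-b * (x - μ)^2)) := by
    ext x; rw [hpdf]; ring
  rw [h2, MeasureTheory.integral_const_mul]
  have h3 : ∫ x : ℝ, x^2 * Real.exp (-b * (x - μ)^2)
      = ∫ y : ℝ, (y + μ)^2 * Real.exp (-b * y^2) := by
    rw [← integral_add_right_eq_self (fun x : ℝ => x^2 * Real.exp (-b * (x - μ)^2)) μ]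
    congr 1
    ext y
    simp [add_sub_cancel_right]
  have h4 := integral_add (hI2.add (hI1.const_mul (2*μ))) (hI0.const_mul (μ^2))
  have h5 := integral_add hI2 (hI1.const_mul (2*μ))
  simp only [Pi.add_apply] at h4
  rw [h3, hsum, h4, h5, MeasureTheory.integral_const_mul,
    MeasureTheory.integral_const_mul, int_sq_exp hb, int_odd_exp, integral_gaussian]
  have hπb : π / b = 2 * π * (v:ℝ) := by
    rw [hbdef]; field_simp
  have hsqrt : c * Real.sqrt (π / b) = 1 := by
    rw [hπb, hcdef]
    exact inv_mul_cancel₀ (by positivity)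
  have hbv : 1 / (2*b) = (v:ℝ) := by
    rw [hbdef]; field_simp
  calc c * (Real.sqrt (π / b) / (2*b) + 2 * μ * 0 + μ^2 * Real.sqrt (π / b))
      = (c * Real.sqrt (π / b)) * (1/(2*b)) + (c * Real.sqrt (π / b)) * μ^2 := by ring
    _ = (v:ℝ) + μ^2 := by rw [hsqrt, hbv]; ring

lemma fmin {m u : ℝ} (hm : 0 < m) (hu : 0 < u) :
    (1/2) * Real.log (2*m) + m/(2*m) ≤ (1/2) * Real.log u + m/u := by
  have h := Real.log_le_sub_one_of_pos (show 0 < 2*m/u by positivity)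
  rw [Real.log_div (by positivity) hu.ne', mul_div_assoc] at h
  have h0 : m/(2*m) = 1/2 := by field_simp
  rw [h0]
  linarith

lemma star_eq {Ω : Type*} [MeasureSpace Ω] [IsProbabilityMeasure (ℙ : Measure Ω)]
    (a : Ω → ℝ) (ha : Measurable a) (μ0 r : ℝ) (hr : 0 < r)
    (hlaw : Measure.map a ℙ = gaussianReal μ0 (r/2).toNNReal)
    (ustar : ℝ) (h1 : ustar ∈ Set.Ioi (0:ℝ))
    (h2 : ∀ u ∈ Set.Ioi (0 : ℝ), ustar ≠ u →
      (∫ ω, ((1/2) * Real.log ustar + (a ω)^2 / ustar) ∂ℙ)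
        < ∫ ω, ((1/2) * Real.log u + (a ω)^2 / u) ∂ℙ) :
    ustar = r + 2*μ0^2 := by
  have hvne : ((r/2).toNNReal : ℝ≥0) ≠ 0 := by
    simp only [ne_eq, Real.toNNReal_eq_zero, not_le]
    positivity
  obtain ⟨hInt, hMom⟩ := gaussian_sq_int μ0 (r/2).toNNReal hvne
  have hvcoe : (((r/2).toNNReal : ℝ≥0) : ℝ) = r/2 :=
    Real.coe_toNNReal _ (by positivity)
  -- second moment of a
  have hIa : Integrable (fun ω => (a ω)^2) ℙ := by
    have h := (integrable_map_measure (μ := (ℙ : Measure Ω)) (f := a) (g := fun x : ℝ => x^2)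
      (measurable_id.pow_const 2).aestronglyMeasurable ha.aemeasurable)
    rw [hlaw] at h
    exact h.mp hInt
  have hmom : ∫ ω, (a ω)^2 ∂ℙ = r/2 + μ0^2 := by
    have h := integral_map (μ := (ℙ : Measure Ω)) (φ := a) (f := fun x : ℝ => x^2) ha.aemeasurable
      (measurable_id.pow_const 2).aestronglyMeasurable
    rw [hlaw, hMom, hvcoe] at h
    exact h.symm
  set m : ℝ := r/2 + μ0^2 with hmdef
  have hm : 0 < m := by positivity
  -- the objective function evaluates nicely
  have hF : ∀ u : ℝ, (∫ ω, ((1/2) * Real.log u + (a ω)^2 / u) ∂ℙ)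
      = (1/2) * Real.log u + m/u := by
    intro u
    rw [integral_add (integrable_const _) (hIa.div_const u), integral_const,
      integral_div, hmom]
    simp
  have hmem : (2*m) ∈ Set.Ioi (0:ℝ) := by simp [hm]
  have heq : ustar = 2*m := by
    by_contra hne
    have hlt := h2 (2*m) hmem hne
    rw [hF, hF] at hlt
    have hle := fmin hm (Set.mem_Ioi.mp h1)
    linarith
  rw [heq, hmdef]; ring
end MerlinAux

end MerlinAux

/-- for independent `a ~ N(Re d, r/2)` and `b ~ N(Im d, r/2)` with
`r > 0`, if `u*` (resp. `v*`) minimizes `u ↦ E[(1/2) log u + a²/u]`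
(resp. `v ↦ E[(1/2) log v + b²/v]`) over `(0, ∞)`, then
`(u* + v*)/2 = r + |d|²` (unbiasedness of multi-temporal MERLIN). -/
theorem merlin_unbiased
    {Ω : Type*} [MeasureSpace Ω] [IsProbabilityMeasure (ℙ : Measure Ω)]
    (a b : Ω → ℝ) (ha : Measurable a) (hb : Measurable b)
    (hab : IndepFun a b) (d : ℂ) (r : ℝ) (hr : 0 < r)
    (hlawa : Measure.map a ℙ = gaussianReal d.re (r/2).toNNReal)
    (hlawb : Measure.map b ℙ = gaussianReal d.im (r/2).toNNReal)
    (ustar vstar : ℝ)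
    (hu : ustar ∈ Set.Ioi (0 : ℝ) ∧ ∀ u ∈ Set.Ioi (0 : ℝ), ustar ≠ u →
      (∫ ω, ((1/2) * Real.log ustar + (a ω)^2 / ustar) ∂ℙ)
        < ∫ ω, ((1/2) * Real.log u + (a ω)^2 / u) ∂ℙ)
    (hv : vstar ∈ Set.Ioi (0 : ℝ) ∧ ∀ v ∈ Set.Ioi (0 : ℝ), vstar ≠ v →
      (∫ ω, ((1/2) * Real.log vstar + (b ω)^2 / vstar) ∂ℙ)
        < ∫ ω, ((1/2) * Real.log v + (b ω)^2 / v) ∂ℙ) :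
    (ustar + vstar) / 2 = r + ‖d‖ ^ 2 := by
  have hueq := MerlinAux.star_eq a ha d.re r hr hlawa ustar hu.1 hu.2
  have hveq := MerlinAux.star_eq b hb d.im r hr hlawb vstar hv.1 hv.2
  rw [hueq, hveq, Complex.sq_norm, Complex.normSq_apply]
  ring
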